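/- Let p and q be odd coprime positive integers, n a positive odd integer, and N = pqn + 1 (which is even). Then the set {cos(pqkπ/N) : k ∈ ℤ, 0 < k < N, k ≡ n mod 2} equals the set {cos(pkπ/N) : k ∈ ℤ, 0 < k < N, k odd}. -/

import Mathlib

open Real

private lemma cos_modeq_aux (a b M : ℤ) (hM : (M:ℝ) ≠ 0)
    (h : a ≡ b [ZMOD 2*M]) :
    Real.cos ((a:ℝ) * π / M) = Real.cos ((b:ℝ) * π / M) := by
  obtain ⟨t, ht⟩ := Int.ModEq.dvd h
  have hR : (b:ℝ) - (a:ℝ) = 2*(M:ℝ)*(t:ℝ) := by exact_mod_cast ht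
  have key : (a:ℝ)*π/M = (b:ℝ)*π/M + ((-t : ℤ):ℝ)*(2*π) := by
    have hc : ((-t : ℤ):ℝ) = -(t:ℝ) := by push_cast; ring
    rw [hc]
    field_simp
    linear_combination (-1 : ℝ) * hR
  rw [key, Real.cos_add_int_mul_two_pi]

private lemma cos_modeq (a b M : ℤ) (hM : (M:ℝ) ≠ 0)
    (h : a ≡ b [ZMOD 2*M] ∨ a ≡ -b [ZMOD 2*M]) :
    Real.cos ((a:ℝ) * π / M) = Real.cos ((b:ℝ) * π / M) := by
  rcases h with h | h
  · exact cos_modeq_aux a b M hM h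
  · have := cos_modeq_aux a (-b) M hM h
    rw [this]
    have : ((-b : ℤ) : ℝ) * π / M = -((b:ℝ) * π / M) := by push_cast; ring
    rw [this, Real.cos_neg]

private lemma reduce_odd (m M : ℤ) (hM : 0 < M) (hMe : 2 ∣ M) (hm : Odd m) :
    ∃ j, 0 < j ∧ j < M ∧ Odd j ∧ (m ≡ j [ZMOD 2*M] ∨ m ≡ -j [ZMOD 2*M]) := by
  have h2M : 0 < 2*M := by linarith
  set r := m % (2*M) with hr
  have h0 : 0 ≤ r := Int.emod_nonneg _ (by omega)
  have h2 : r < 2*M := Int.emod_lt_of_pos _ h2M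
  have hmr : m ≡ r [ZMOD 2*M] := (Int.emod_emod_of_dvd m dvd_rfl).symm
  have hr2 : r % 2 = 1 := by
    have := (Int.ModEq.of_dvd (by omega : (2:ℤ) ∣ 2*M) hmr)
    have hm2 : m % 2 = 1 := Int.odd_iff.mp hm
    unfold Int.ModEq at this
    omega
  obtain ⟨M2, hM2⟩ := hMe
  rcases lt_or_ge r M with hlt | hge
  · exact ⟨r, by omega, hlt, Int.odd_iff.mpr hr2, Or.inl hmr⟩
  · refine ⟨2*M - r, by omega, by omega, Int.odd_iff.mpr (by omega), Or.inr ?_⟩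
    have : r ≡ -(2*M - r) [ZMOD 2*M] := by
      rw [Int.modEq_iff_dvd]
      exact ⟨-1, by ring⟩
    exact hmr.trans this

theorem cos_set_equality_odd_case (p q : ℕ) (hp : 0 < p) (hq : 0 < q)
    (hpodd : Odd p) (hqodd : Odd q) (hpq : Nat.Coprime p q)
    (n : ℤ) (hn : 0 < n) (hnodd : Odd n) (N : ℤ) (hN : N = p * q * n + 1) :
    {x : ℝ | ∃ k : ℤ, 0 < k ∧ k < N ∧ k % 2 = n % 2 ∧
        x = Real.cos ((p : ℝ) * q * k * π / (N : ℝ))} =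
    {x : ℝ | ∃ k : ℤ, 0 < k ∧ k < N ∧ Odd k ∧
        x = Real.cos ((p : ℝ) * k * π / (N : ℝ))} := by
  have hqoddZ : Odd (q:ℤ) := by exact_mod_cast hqodd
  have hpoddZ : Odd (p:ℤ) := by exact_mod_cast hpodd
  have hNpos : 0 < N := by
    have : 0 < (p:ℤ) * q * n := by positivity
    omega
  have hNeven : 2 ∣ N := by
    have hodd : Odd ((p:ℤ) * q * n) := (hpoddZ.mul hqoddZ).mul hnodd
    obtain ⟨t, ht⟩ := hodd
    omega
  have hNR : (N:ℝ) ≠ 0 := by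
    simp only [ne_eq, Int.cast_eq_zero]; omega
  -- inverse of q mod 2N
  obtain ⟨t, ht⟩ := hqodd
  have hc2 : IsCoprime (q:ℤ) 2 := ⟨1, -(t:ℤ), by push_cast [ht]; ring⟩
  have hcN : IsCoprime (q:ℤ) N := ⟨-((p:ℤ)*n), 1, by rw [hN]; push_cast; ring⟩
  have hc : IsCoprime (q:ℤ) (2*N) := hc2.mul_right hcN
  obtain ⟨u, v, huv⟩ := hc
  have hinv : (q:ℤ) * u ≡ 1 [ZMOD 2*N] := by
    rw [Int.modEq_iff_dvd]
    exact ⟨v, by linarith⟩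
  have huodd : Odd u := by
    have h1 : ((q:ℤ) * u) % 2 = 1 % 2 := by
      have := Int.ModEq.of_dvd (by omega : (2:ℤ) ∣ 2*N) hinv
      exact this
    have hqu : Odd ((q:ℤ) * u) := Int.odd_iff.mpr (by omega)
    rcases Int.even_or_odd u with he | ho
    · exact absurd (he.mul_left _) (Int.not_even_iff_odd.mpr hqu)
    · exact ho
  have hn1 : n % 2 = 1 := Int.odd_iff.mp hnodd
  ext x
  simp only [Set.mem_setOf_eq]
  constructor
  · rintro ⟨k, hk0, hkN, hk2, rfl⟩
    have hkodd : Odd k := Int.odd_iff.mpr (by omega)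
    obtain ⟨j, hj0, hjN, hjodd, hjc⟩ :=
      reduce_odd ((q:ℤ)*k) N hNpos hNeven (hqoddZ.mul hkodd)
    refine ⟨j, hj0, hjN, hjodd, ?_⟩
    have hmod : (p:ℤ) * ((q:ℤ)*k) ≡ (p:ℤ) * j [ZMOD 2*N] ∨
        (p:ℤ) * ((q:ℤ)*k) ≡ -((p:ℤ) * j) [ZMOD 2*N] := by
      rcases hjc with h | h
      · exact Or.inl (h.mul_left _)
      · right
        have := h.mul_left (p:ℤ)
        simpa [mul_neg] using this
    have h2 := cos_modeq ((p:ℤ)*((q:ℤ)*k)) ((p:ℤ)*j) N hNR hmod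
    push_cast at h2
    rw [show (p:ℝ)*q*k = (p:ℝ)*((q:ℝ)*k) from by ring]
    exact h2
  · rintro ⟨j, hj0, hjN, hjodd, rfl⟩
    obtain ⟨k, hk0, hkN, hkodd, hkc⟩ :=
      reduce_odd (u * j) N hNpos hNeven (huodd.mul hjodd)
    have hk2 := Int.odd_iff.mp hkodd
    refine ⟨k, hk0, hkN, by omega, ?_⟩
    have hj1 : j ≡ (q:ℤ) * u * j [ZMOD 2*N] := by
      simpa using (hinv.mul_right j).symm
    have hmod : (p:ℤ) * j ≡ (p:ℤ) * ((q:ℤ)*k) [ZMOD 2*N] ∨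
        (p:ℤ) * j ≡ -((p:ℤ) * ((q:ℤ)*k)) [ZMOD 2*N] := by
      rcases hkc with h | h
      · left
        have h2 : (q:ℤ) * u * j ≡ (q:ℤ) * k [ZMOD 2*N] := by
          simpa [mul_assoc] using h.mul_left (q:ℤ)
        exact (hj1.trans h2).mul_left _
      · right
        have h2 : (q:ℤ) * u * j ≡ -((q:ℤ) * k) [ZMOD 2*N] := by
          simpa [mul_assoc, mul_neg] using h.mul_left (q:ℤ)
        have := (hj1.trans h2).mul_left (p:ℤ)
        simpa [mul_neg] using this
    have h2 := cos_modeq ((p:ℤ)*j) ((p:ℤ)*((q:ℤ)*k)) N hNR hmod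
    push_cast at h2
    rw [show (p:ℝ)*q*k = (p:ℝ)*((q:ℝ)*k) from by ring]
    exact h2
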